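/- Under the hypotheses of Theorem 2, the density of cell 1 in system S equals the density of cell 1 in system S*: P(1,0) + P(2,0) + P(1,1) + P(1,2) + P(2,1) + P(2,2) = P*(1,0) + P*(1,1). Similarly for cell 2: P(0,1) + P(0,2) + P(1,1) + P(1,2) + P(2,1) + P(2,2) = P*(0,1) + P*(1,1). -/
import Mathlib

theorem densities_match (α β p1 p2 a1 a2 : ℝ)
    (hα : α ∈ Set.Ioo (0:ℝ) 1) (hβ : β ∈ Set.Ioo (0:ℝ) 1)
    (hp1 : p1 ∈ Set.Ioo (0:ℝ) 1) (hp2 : p2 ∈ Set.Ioo (0:ℝ) 1)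
    (ha1 : 0 < a1) (ha2 : 0 < a2) (hsum : a1 + a2 = 1)
    (pstar : ℝ) (hps : pstar = 1 / (a1 / p1 + a2 / p2))
    (S00 S01 S10 S11 : ℝ)
    (e12 : α * S00 = (1 - α) * β * S01)
    (e13 : (1 - (1 - α) * (1 - β)) * S01 = pstar * S10)
    (e14 : pstar * S10 = α * S00 + α * β * S01 + β * S11)
    (e15 : β * S11 = α * (1 - β) * S01)
    (e16 : S00 + S01 + S10 + S11 = 1)
    (P00 P01 P02 P10 P20 P11 P12 P21 P22 : ℝ)
    (d00 : P00 = S00) (d01 : P01 = a1 * S01) (d02 : P02 = a2 * S01)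
    (d10 : P10 = (a1 * pstar / p1) * S10) (d20 : P20 = (a2 * pstar / p2) * S10)
    (d11 : P11 = a1 ^ 2 * S11) (d12 : P12 = a1 * a2 * S11)
    (d21 : P21 = a1 * a2 * S11) (d22 : P22 = a2 ^ 2 * S11) :
    P10 + P20 + P11 + P12 + P21 + P22 = S10 + S11 ∧
    P01 + P02 + P11 + P12 + P21 + P22 = S01 + S11 := by
  have hpos : 0 < a1 / p1 + a2 / p2 :=
    add_pos (div_pos ha1 hp1.1) (div_pos ha2 hp2.1)
  have hkey : pstar * (a1 / p1 + a2 / p2) = 1 := by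
    rw [hps]; field_simp
  have h1 : a1 * pstar / p1 + a2 * pstar / p2 = 1 := by
    rw [show a1 * pstar / p1 + a2 * pstar / p2 = pstar * (a1 / p1 + a2 / p2) from by ring, hkey]
  constructor
  · subst d10 d20 d11 d12 d21 d22
    linear_combination S10 * h1 + S11 * (a1 + a2 + 1) * hsum
  · subst d01 d02 d11 d12 d21 d22
    linear_combination S01 * hsum + S11 * (a1 + a2 + 1) * hsum
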